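/- Let E be a simple regular expression over an alphabet α. The nondeterministic automaton whose state type is RegularExpression α, whose transition function sends a state q and a symbol a to the set ∂ₐ(q) of Antimirov partial derivatives of q with respect to a, whose set of start states is {E}, and whose accepting states are the expressions q with ε ∈ L(q), accepts exactly the language L(E). (This is the correctness of Antimirov's derived-term NFA, i.e., of the (D_A, B_A)-alternating automaton construction.) -/

import Mathlib

open scoped Classical
open Computability

/-- The Antimirov partial derivative of a regular expression with respect to a symbol. -/
noncomputable def aderiv {α : Type*} (a : α) : RegularExpression α → Set (RegularExpression α)
  | .zero => ∅
  | .epsilon => ∅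
  | .char b => if b = a then {1} else ∅
  | .plus E₁ E₂ => aderiv a E₁ ∪ aderiv a E₂
  | .comp E₁ E₂ =>
      if [] ∈ E₁.matches' then ((· * E₂) '' aderiv a E₁) ∪ aderiv a E₂
      else (· * E₂) '' aderiv a E₁
  | .star E₁ => (· * E₁.star) '' aderiv a E₁

/-- Iterated Antimirov partial derivative with respect to a word. -/
noncomputable def aderivWord {α : Type*} : List α → RegularExpression α → Set (RegularExpression α)
  | [], E => {E}
  | a :: w, E => ⋃ F ∈ aderiv a E, aderivWord w F

/-- Left quotient of a language by a word. -/
def lquot {α : Type*} (w : List α) (L : Language α) : Language α := {v | w ++ v ∈ L}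

lemma cons_mem_matches_iff {α : Type*} (a : α) (E : RegularExpression α) (w : List α) :
    a :: w ∈ E.matches' ↔ ∃ F ∈ aderiv a E, w ∈ F.matches' := by
  induction E generalizing w with
  | zero => simp [aderiv, RegularExpression.matches'_zero]
  | epsilon => simp [aderiv, RegularExpression.matches'_epsilon, Language.mem_one]
  | char b =>
    constructor
    · rintro h
      have h' : a :: w = [b] := h
      simp only [List.cons.injEq] at h'
      obtain ⟨rfl, rfl⟩ := h'
      refine ⟨1, ?_, ?_⟩
      · simp [aderiv]
      · simp [RegularExpression.matches'_epsilon, Language.mem_one]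
    · rintro ⟨F, hF, hw⟩
      by_cases hb : b = a
      · subst hb
        simp only [aderiv, if_pos rfl, Set.mem_singleton_iff] at hF
        subst hF
        simp only [RegularExpression.matches'_epsilon, Language.mem_one] at hw
        subst hw
        exact rfl
      · simp [aderiv, if_neg hb] at hF
  | plus E₁ E₂ ih₁ ih₂ =>
    show a :: w ∈ E₁.matches' + E₂.matches' ↔ _
    rw [Language.mem_add]
    simp only [ih₁, ih₂, aderiv]
    constructor
    · rintro (⟨F, hF, hw⟩ | ⟨F, hF, hw⟩)
      exacts [⟨F, Or.inl hF, hw⟩, ⟨F, Or.inr hF, hw⟩]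
    · rintro ⟨F, hF | hF, hw⟩
      exacts [Or.inl ⟨F, hF, hw⟩, Or.inr ⟨F, hF, hw⟩]
  | comp E₁ E₂ ih₁ ih₂ =>
    show a :: w ∈ E₁.matches' * E₂.matches' ↔ _
    constructor
    · intro h
      obtain ⟨x, hx, y, hy, hxy⟩ := Language.mem_mul.1 h
      rcases x with _ | ⟨a', x'⟩
      · simp only [List.nil_append] at hxy
        subst hxy
        obtain ⟨F, hF, hw⟩ := (ih₂ w).1 hy
        exact ⟨F, by simp [aderiv, if_pos hx, hF], hw⟩
      · obtain ⟨rfl, rfl⟩ : a' = a ∧ w = x' ++ y := by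
          simpa [eq_comm, and_comm] using hxy
        obtain ⟨F, hF, hx'⟩ := (ih₁ x').1 hx
        refine ⟨F * E₂, ?_, Language.append_mem_mul hx' hy⟩
        by_cases hε : [] ∈ E₁.matches'
        · simp only [aderiv, if_pos hε]
          exact Set.mem_union_left _ ⟨F, hF, rfl⟩
        · simp only [aderiv, if_neg hε]
          exact ⟨F, hF, rfl⟩
    · rintro ⟨F, hF, hw⟩
      by_cases hε : [] ∈ E₁.matches'
      · simp only [aderiv, if_pos hε, Set.mem_union, Set.mem_image] at hF
        rcases hF with ⟨G, hG, rfl⟩ | hF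
        · obtain ⟨x, hx, y, hy, rfl⟩ := Language.mem_mul.1 hw
          have h1 : a :: x ∈ E₁.matches' := (ih₁ x).2 ⟨G, hG, hx⟩
          simpa using Language.append_mem_mul h1 hy
        · have : a :: w ∈ E₂.matches' := (ih₂ w).2 ⟨F, hF, hw⟩
          simpa using Language.append_mem_mul hε this
      · simp only [aderiv, if_neg hε, Set.mem_image] at hF
        obtain ⟨G, hG, rfl⟩ := hF
        obtain ⟨x, hx, y, hy, rfl⟩ := Language.mem_mul.1 hw
        have h1 : a :: x ∈ E₁.matches' := (ih₁ x).2 ⟨G, hG, hx⟩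
        simpa using Language.append_mem_mul h1 hy
  | star E₁ ih =>
    show a :: w ∈ E₁.matches'∗ ↔ _
    constructor
    · intro h
      obtain ⟨S, hS, hmem⟩ := Language.mem_kstar_iff_exists_nonempty.1 h
      rcases S with _ | ⟨x0, S'⟩
      · simp at hS
      rcases x0 with _ | ⟨a', x⟩
      · exact absurd rfl (hmem [] (by simp)).2
      obtain ⟨rfl, rfl⟩ : a' = a ∧ w = x ++ S'.flatten := by
        simpa [eq_comm, and_comm] using hS
      obtain ⟨F, hF, hx⟩ := (ih x).1 (hmem _ (by simp)).1
      refine ⟨F * E₁.star, ⟨F, hF, rfl⟩, ?_⟩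
      have h2 : S'.flatten ∈ E₁.matches'∗ :=
        Language.join_mem_kstar fun y hy => (hmem y (by simp [hy])).1
      exact Language.append_mem_mul hx (by simpa using h2)
    · rintro ⟨F, ⟨G, hG, rfl⟩, hw⟩
      obtain ⟨x, hx, y, hy, rfl⟩ := Language.mem_mul.1 hw
      have h1 : a :: x ∈ E₁.matches' := (ih x).2 ⟨G, hG, hx⟩
      have h2 : y ∈ E₁.matches'∗ := by simpa using hy
      exact mul_kstar_le_kstar (a := E₁.matches') (Language.append_mem_mul h1 h2)

lemma mem_evalFrom_iff {α σ : Type*} (M : NFA α σ) (w : List α) (S : Set σ) (q : σ) :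
    q ∈ M.evalFrom S w ↔ ∃ s ∈ S, q ∈ M.evalFrom {s} w := by
  induction w generalizing S with
  | nil => simp
  | cons a w ih =>
    rw [show M.evalFrom S (a :: w) = M.evalFrom (M.stepSet S a) w from rfl, ih]
    constructor
    · rintro ⟨t, ht, hq⟩
      obtain ⟨s, hs, hts⟩ := M.mem_stepSet.1 ht
      refine ⟨s, hs, ?_⟩
      rw [show M.evalFrom {s} (a :: w) = M.evalFrom (M.stepSet {s} a) w from rfl, ih]
      exact ⟨t, M.mem_stepSet.2 ⟨s, Set.mem_singleton s, hts⟩, hq⟩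
    · rintro ⟨s, hs, hq⟩
      rw [show M.evalFrom {s} (a :: w) = M.evalFrom (M.stepSet {s} a) w from rfl, ih] at hq
      obtain ⟨t, ht, hq⟩ := hq
      obtain ⟨s', hs', hts⟩ := M.mem_stepSet.1 ht
      rw [Set.mem_singleton_iff] at hs'
      subst hs'
      exact ⟨t, M.mem_stepSet.2 ⟨s', hs, hts⟩, hq⟩

theorem antimirov_nfa_correct {α : Type*} (E : RegularExpression α) :
    (NFA.mk (fun q a => aderiv a q) {E} {q : RegularExpression α | [] ∈ q.matches'}).accepts =
      E.matches' := by
  set M : NFA α (RegularExpression α) :=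
    NFA.mk (fun q a => aderiv a q) {E} {q : RegularExpression α | [] ∈ q.matches'} with hM
  suffices h : ∀ (w : List α) (F : RegularExpression α),
      (∃ q ∈ M.accept, q ∈ M.evalFrom {F} w) ↔ w ∈ F.matches' by
    ext w
    rw [NFA.mem_accepts]
    exact h w E
  intro w
  induction w with
  | nil =>
    intro F
    simp [hM, NFA.evalFrom_nil]
  | cons a w ih =>
    intro F
    rw [cons_mem_matches_iff]
    have hss : M.stepSet {F} a = aderiv a F := by
      ext q; simp [NFA.stepSet, hM]
    constructor
    · rintro ⟨q, hq, hmem⟩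
      rw [show M.evalFrom {F} (a :: w) = M.evalFrom (M.stepSet {F} a) w from rfl, hss,
        mem_evalFrom_iff] at hmem
      obtain ⟨G, hG, hq'⟩ := hmem
      exact ⟨G, hG, (ih G).1 ⟨q, hq, hq'⟩⟩
    · rintro ⟨G, hG, hw⟩
      obtain ⟨q, hq, hq'⟩ := (ih G).2 hw
      refine ⟨q, hq, ?_⟩
      rw [show M.evalFrom {F} (a :: w) = M.evalFrom (M.stepSet {F} a) w from rfl, hss,
        mem_evalFrom_iff]
      exact ⟨G, hG, hq'⟩
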